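/- Let (M, ρ) be a metric space admitting a minimal spanning tree. Then the graph G_min(M, ρ) on vertex set M, whose edges are the pairs vw such that there is a partition M = M' ⊔ M'' into nonempty sets with v ∈ M', w ∈ M'' and ρ(v, w) = ρ(M', M''), is connected. -/

import Mathlib

open scoped ENNReal

namespace MSTPaper

variable {M : Type*}

/-- The length of an edge `e` of a graph on a metric space: the extended
distance between its endpoints. -/
noncomputable def edgeLen [MetricSpace M] (e : Sym2 M) : ℝ≥0∞ :=
  Sym2.lift ⟨fun x y => edist x y, fun x y => edist_comm x y⟩ e

/-- The length of a graph: the (possibly infinite) sum of the lengths of its edges. -/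
noncomputable def graphLen [MetricSpace M] (G : SimpleGraph M) : ℝ≥0∞ :=
  ∑' e : G.edgeSet, edgeLen (e : Sym2 M)

/-- The distance between two subsets of a metric space. -/
noncomputable def setDist [MetricSpace M] (A B : Set M) : ℝ≥0∞ :=
  ⨅ x ∈ A, ⨅ y ∈ B, edist x y

/-- A minimal spanning tree on the metric space `M`: a spanning tree of finite
length whose length equals the infimum of lengths of all spanning trees on `M`. -/
def IsMST [MetricSpace M] (T : SimpleGraph M) : Prop :=
  T.IsTree ∧ graphLen T < ⊤ ∧ ∀ T' : SimpleGraph M, T'.IsTree → graphLen T ≤ graphLen T'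

/-- An edge `uv` of `G` is exact if its length equals the distance between the
two connected components obtained by removing it. -/
def ExactEdge [MetricSpace M] (G : SimpleGraph M) (u v : M) : Prop :=
  edist u v = setDist {x | (G.deleteEdges {s(u,v)}).Reachable u x}
                      {x | (G.deleteEdges {s(u,v)}).Reachable v x}


/-- The graph `G_min(M, ρ)` whose edges are pairs attaining the distance between the
parts of some partition of `M`. -/
noncomputable def Gmin (M : Type*) [MetricSpace M] : SimpleGraph M :=
  SimpleGraph.fromRel (fun v w => ∃ A B : Set M, Disjoint A B ∧ A ∪ B = Set.univ ∧
    v ∈ A ∧ w ∈ B ∧ edist v w = setDist A B)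

lemma edgeLen_mk [MetricSpace M] (x y : M) : edgeLen s(x, y) = edist x y := rfl

/-- Splitting off one edge from the length of a graph. -/
lemma graphLen_deleteEdge [MetricSpace M] {G : SimpleGraph M} {e : Sym2 M}
    (he : e ∈ G.edgeSet) :
    graphLen G = edgeLen e + graphLen (G.deleteEdges {e}) := by
  have hset : G.edgeSet = {e} ∪ (G.edgeSet \ {e}) := by
    rw [Set.union_diff_cancel (by simpa using he)]
  have hdisj : Disjoint ({e} : Set (Sym2 M)) (G.edgeSet \ {e}) :=
    Set.disjoint_sdiff_right.mono_left le_rfl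
  calc graphLen G = ∑' x : ↥(({e} : Set (Sym2 M)) ∪ (G.edgeSet \ {e})),
          edgeLen (x : Sym2 M) :=
        tsum_congr_set_coe _ hset
    _ = (∑' x : ({e} : Set (Sym2 M)), edgeLen (x : Sym2 M)) +
          ∑' x : ↥(G.edgeSet \ {e}), edgeLen (x : Sym2 M) :=
        ENNReal.summable.tsum_union_disjoint hdisj ENNReal.summable
    _ = edgeLen e + graphLen (G.deleteEdges {e}) := by
        rw [tsum_singleton]
        unfold graphLen
        rw [SimpleGraph.edgeSet_deleteEdges]

/-- If a minimal spanning tree exists, then `G_min(M, ρ)` is connected. -/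
theorem Gmin_connected_of_mst [MetricSpace M] (h : ∃ T : SimpleGraph M, IsMST T) :
    (Gmin M).Connected := by
  classical
  obtain ⟨T, hTree, hfin, hmin⟩ := h
  have hconn : T.Connected := hTree.isConnected
  have hacyc : T.IsAcyclic := hTree.IsAcyclic
  -- It suffices that `T ≤ Gmin M`.
  have hle : T ≤ Gmin M := by
    intro u v huv
    set T' : SimpleGraph M := T.deleteEdges {s(u, v)} with hT'
    set A : Set M := {x | T'.Reachable u x} with hA
    set B : Set M := {x | T'.Reachable v x} with hB
    have hbridge : T.IsBridge s(u, v) :=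
      (SimpleGraph.isAcyclic_iff_forall_adj_isBridge.mp hacyc) huv
    have hnr : ¬ T'.Reachable u v := SimpleGraph.isBridge_iff.mp hbridge
    have huA : u ∈ A := SimpleGraph.Reachable.refl u
    have hvB : v ∈ B := SimpleGraph.Reachable.refl v
    have hdisjAB : Disjoint A B := by
      rw [Set.disjoint_left]
      intro z hz hz'
      exact hnr (hz.trans hz'.symm)
    -- A and B cover M
    have hstep : ∀ a b : M, T.Adj a b → (a ∈ A ∨ a ∈ B) → (b ∈ A ∨ b ∈ B) := by
      intro a b hab ha
      by_cases hsab : s(a, b) = s(u, v)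
      · rcases Sym2.eq_iff.mp hsab with ⟨rfl, rfl⟩ | ⟨rfl, rfl⟩
        · exact Or.inr hvB
        · exact Or.inl huA
      · have hab' : T'.Adj a b := by
          rw [hT', SimpleGraph.deleteEdges_adj]
          exact ⟨hab, by simpa using hsab⟩
        rcases ha with ha | ha
        · exact Or.inl (ha.trans hab'.reachable)
        · exact Or.inr (ha.trans hab'.reachable)
    have hcover : A ∪ B = Set.univ := by
      rw [Set.eq_univ_iff_forall]
      intro x
      have key : ∀ (a c : M), T.Walk a c → (a ∈ A ∨ a ∈ B) → (c ∈ A ∨ c ∈ B) := by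
        intro a c p
        induction p with
        | nil => exact id
        | cons hadj p ih => exact fun ha => ih (hstep _ _ hadj ha)
      obtain ⟨p⟩ := hconn.preconnected u x
      exact key u x p (Or.inl huA)
    -- distance equality
    have hsd_le : setDist A B ≤ edist u v := by
      refine iInf_le_of_le u ?_
      refine iInf_le_of_le huA ?_
      refine iInf_le_of_le v ?_
      exact iInf_le _ hvB
    have hle_sd : edist u v ≤ setDist A B := by
      refine le_iInf fun x => le_iInf fun hx => le_iInf fun y => le_iInf fun hy => ?_
      by_contra hlt'
      push_neg at hlt'
      -- exchange argument
      have hxy_ne : x ≠ y := fun hxy => hdisjAB.ne_of_mem hx hy hxy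
      have hxy_not : s(x, y) ∉ T'.edgeSet := by
        intro hmem
        rw [SimpleGraph.mem_edgeSet] at hmem
        exact hnr ((hx.trans hmem.reachable).trans (hy.symm))
      set T'' : SimpleGraph M := T' ⊔ SimpleGraph.fromEdgeSet {s(x, y)} with hT''
      have hadjxy : T''.Adj x y := by
        rw [hT'', SimpleGraph.sup_adj]
        exact Or.inr ⟨rfl, hxy_ne⟩
      have hdel : T''.deleteEdges {s(x, y)} = T' := by
        ext a b
        simp only [SimpleGraph.deleteEdges_adj, hT'', SimpleGraph.sup_adj,
          SimpleGraph.fromEdgeSet_adj, Set.mem_singleton_iff]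
        constructor
        · rintro ⟨hab | ⟨hab, _⟩, hne⟩
          · exact hab
          · exact absurd hab hne
        · intro hab
          refine ⟨Or.inl hab, fun heq => hxy_not ?_⟩
          rw [SimpleGraph.mem_edgeSet, ← SimpleGraph.mem_edgeSet] at *
          have : s(a, b) ∈ T'.edgeSet := hab
          rwa [heq] at this
      have hedgeSet : T''.edgeSet = insert s(x, y) T'.edgeSet := by
        rw [hT'', SimpleGraph.edgeSet_sup, SimpleGraph.edgeSet_fromEdgeSet]
        have hnd : ({s(x, y)} : Set (Sym2 M)) \ {e | e.IsDiag} = {s(x, y)} := by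
          ext e
          constructor
          · exact fun he => he.1
          · rintro rfl
            exact ⟨rfl, fun hd => hxy_ne (Sym2.mk_isDiag_iff.mp hd)⟩
        rw [Sym2.diagSet_eq_setOfPred_isDiag, hnd, Set.union_singleton]
      -- T'' is connected
      have hT'le : T' ≤ T'' := le_sup_left
      have hreach_u : ∀ z : M, T''.Reachable z u := by
        intro z
        have hz := (Set.eq_univ_iff_forall.mp hcover) z
        have hxy_reach : T''.Reachable u v :=
          ((hx.mono hT'le).trans hadjxy.reachable).trans (hy.mono hT'le).symm
        rcases hz with hz | hz
        · exact ((hz : T'.Reachable u z).mono hT'le).symm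
        · exact ((hz : T'.Reachable v z).mono hT'le).symm.trans hxy_reach.symm
      have hconn'' : T''.Connected := by
        rw [SimpleGraph.connected_iff]
        exact ⟨fun a b => (hreach_u a).trans (hreach_u b).symm, ⟨u⟩⟩
      -- T'' is acyclic
      have hacyc'' : T''.IsAcyclic := by
        intro w c hc
        by_cases hmem : s(x, y) ∈ c.edges
        · have hbr'' : T''.IsBridge s(x, y) := by
            rw [SimpleGraph.isBridge_iff]
            refine fun hr => ?_
            have : T'.Reachable x y := by
              have := hr
              rwa [hdel] at this
            exact hnr ((hx.trans this).trans hy.symm)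
          exact (SimpleGraph.isBridge_iff_adj_and_forall_cycle_notMem (T''.mem_edgeSet.mpr hadjxy)).mp hbr'' c hc hmem
        · have hsub : ∀ e ∈ c.edges, e ∈ T.edgeSet := by
            intro e he
            have : e ∈ T''.edgeSet := c.edges_subset_edgeSet he
            rw [hedgeSet, Set.mem_insert_iff] at this
            rcases this with rfl | hmem'
            · exact absurd he hmem
            · rw [hT', SimpleGraph.edgeSet_deleteEdges] at hmem'
              exact hmem'.1
          exact hacyc (c.transfer T hsub) (hc.transfer hsub)
      -- length comparison
      have hlen : graphLen T = edgeLen s(u, v) + graphLen T' :=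
        graphLen_deleteEdge (T.mem_edgeSet.mpr huv)
      have hlen'' : graphLen T'' = edgeLen s(x, y) + graphLen T' := by
        have hxy_mem : s(x, y) ∈ T''.edgeSet := T''.mem_edgeSet.mpr hadjxy
        rw [graphLen_deleteEdge hxy_mem, hdel]
      have hT'fin : graphLen T' ≠ ⊤ := by
        intro htop
        rw [hlen, htop, add_top] at hfin
        exact absurd hfin (lt_irrefl _)
      have hltlen : graphLen T'' < graphLen T := by
        rw [hlen, hlen'', edgeLen_mk, edgeLen_mk]
        exact ENNReal.add_lt_add_right hT'fin hlt'
      exact absurd (hmin T'' ⟨hconn'', hacyc''⟩) (not_le.mpr hltlen)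
    -- conclude adjacency in Gmin
    rw [Gmin, SimpleGraph.fromRel_adj]
    exact ⟨huv.ne, Or.inl ⟨A, B, hdisjAB, hcover, huA, hvB, le_antisymm hle_sd hsd_le⟩⟩
  exact hconn.mono hle

end MSTPaper
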